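/- Let R be a commutative ring, let 𝒮 be a finite set of ideals of R, each different from R, with ⋂_{𝔞 ∈ 𝒮} 𝔞 = {0}. Define a relation on 𝒮 by letting 𝔞 and 𝔟 be adjacent if 𝔞 ≠ 𝔟 and 𝔞 + 𝔟 ≠ R. Let ε : 𝒮 → R be a family with ε(𝔞) ∈ {0, 1} for every 𝔞 ∈ 𝒮. Then there exists x ∈ R with x − ε(𝔞) ∈ 𝔞 for all 𝔞 ∈ 𝒮 if and only if ε(𝔞) = ε(𝔟) whenever 𝔞 and 𝔟 are related under the reflexive-transitive closure of the adjacency relation (i.e., lie in the same connected component of the associated graph). -/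
import Mathlib


/-- Graph version of Lemma `idempotClem` (cf. Proposition `bijgraphprop`(i)): with
`𝒮` a finite set of proper ideals of `R` intersecting in `{0}` and `ε` a `{0,1}`-valued
family, an element `x` with `x ≡ ε(𝔞) mod 𝔞` for all `𝔞 ∈ 𝒮` exists if and only if `ε`
is constant on connected components of the graph on `𝒮` joining distinct `𝔞, 𝔟`
when `𝔞 + 𝔟 ≠ R`. -/
theorem stmt_5 {R : Type*} [CommRing R] (𝒮 : Finset (Ideal R))
    (hproper : ∀ 𝔞 ∈ 𝒮, 𝔞 ≠ ⊤)
    (hinter : (⨅ 𝔞 ∈ 𝒮, 𝔞 : Ideal R) = ⊥)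
    (ε : Ideal R → R) (hε : ∀ 𝔞 ∈ 𝒮, ε 𝔞 = 0 ∨ ε 𝔞 = 1) :
    (∃ x : R, ∀ 𝔞 ∈ 𝒮, x - ε 𝔞 ∈ 𝔞) ↔
      (∀ 𝔞 ∈ 𝒮, ∀ 𝔟 ∈ 𝒮,
        Relation.ReflTransGen
          (fun I J : Ideal R => I ∈ 𝒮 ∧ J ∈ 𝒮 ∧ I ≠ J ∧ I + J ≠ ⊤) 𝔞 𝔟 →
        ε 𝔞 = ε 𝔟) := by
  classical
  constructor
  · rintro ⟨x, hx⟩ 𝔞 h𝔞 𝔟 h𝔟 h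
    induction h with
    | refl => rfl
    | @tail b c hab step ih =>
      obtain ⟨hb, hc, hne, htop⟩ := step
      have key : ε b = ε c := by
        by_contra hne'
        apply htop
        have h1 : ε b - ε c ∈ b + c := by
          have : ε b - ε c = (x - ε c) - (x - ε b) := by ring
          rw [this, Submodule.add_eq_sup]
          exact sub_mem (Submodule.mem_sup_right (hx c hc))
            (Submodule.mem_sup_left (hx b hb))
        have hone : (1 : R) ∈ b + c := by
          rcases hε b hb with h0 | h1'
          · rcases hε c hc with h0' | h1''
            · exact absurd (h0.trans h0'.symm) hne'
            · have : (-1 : R) ∈ b + c := by rwa [h0, h1'', zero_sub] at h1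
              simpa using neg_mem this
          · rcases hε c hc with h0' | h1''
            · rwa [h1', h0', sub_zero] at h1
            · exact absurd (h1'.trans h1''.symm) hne'
        exact (Ideal.eq_top_iff_one _).mpr hone
      exact (ih hb).trans key
  · intro hconst
    set 𝒮₁ := 𝒮.filter (fun 𝔞 => ε 𝔞 = 1) with h𝒮₁
    set 𝒮₀ := 𝒮.filter (fun 𝔞 => ε 𝔞 ≠ 1) with h𝒮₀
    have hcomax : ∀ 𝔞 ∈ 𝒮₀, ∀ 𝔟 ∈ 𝒮₁, 𝔞 ⊔ 𝔟 = ⊤ := by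
      intro 𝔞 h𝔞 𝔟 h𝔟
      rw [Finset.mem_filter] at h𝔞 h𝔟
      by_contra htop
      have hne : 𝔞 ≠ 𝔟 := fun h => h𝔞.2 (h ▸ h𝔟.2)
      have : ε 𝔞 = ε 𝔟 := hconst 𝔞 h𝔞.1 𝔟 h𝔟.1
        (Relation.ReflTransGen.single ⟨h𝔞.1, h𝔟.1, hne, by rwa [Submodule.add_eq_sup]⟩)
      exact h𝔞.2 (this.trans h𝔟.2)
    have hIJ : (⨅ 𝔞 ∈ 𝒮₀, 𝔞) ⊔ (⨅ 𝔟 ∈ 𝒮₁, 𝔟) = ⊤ := by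
      apply Ideal.sup_iInf_eq_top
      intro 𝔟 h𝔟
      exact Ideal.iInf_sup_eq_top (fun 𝔞 h𝔞 => hcomax 𝔞 h𝔞 𝔟 h𝔟)
    obtain ⟨a, ha, b, hb, hab⟩ := Submodule.mem_sup.mp
      ((Ideal.eq_top_iff_one _).mp hIJ)
    refine ⟨a, fun 𝔞 h𝔞 => ?_⟩
    rcases hε 𝔞 h𝔞 with h0 | h1
    · have h𝔞0 : 𝔞 ∈ 𝒮₀ := Finset.mem_filter.mpr ⟨h𝔞, by
        simp only [h0]
        intro h01
        -- trivial ring case: everything is in 𝔞 anyway, but we derive contradiction impossible;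
        -- instead note 0 = 1 makes 𝔞 = ⊤? No: subsingleton means 𝔞 = ⊤, contradicting hproper
        have : Subsingleton R := subsingleton_of_zero_eq_one h01
        exact hproper 𝔞 h𝔞 (Subsingleton.elim _ _)⟩
      have : a ∈ 𝔞 := by
        have := Ideal.mem_iInf.mp (Ideal.mem_iInf.mp ha 𝔞) h𝔞0
        exact this
      rwa [h0, sub_zero]
    · have h𝔞1 : 𝔞 ∈ 𝒮₁ := Finset.mem_filter.mpr ⟨h𝔞, h1⟩
      have hbmem : b ∈ 𝔞 := Ideal.mem_iInf.mp (Ideal.mem_iInf.mp hb 𝔞) h𝔞1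
      have : a - 1 ∈ 𝔞 := by
        have : a - 1 = -b := by linear_combination hab
        rw [this]; exact neg_mem hbmem
      rwa [h1]
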